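/- arXiv:1908.03751 — 2 statements merged into one kernel-verified Lean document; each statement's English description precedes it below -/
import Mathlib

section
/- The generating function F(Z,q) = Σ_{m≥0} Ω_{b,T}^Λ(m;Z) q^m satisfies the functional equation F(Z,q) = (1 + Y₁q + Y₂q² + ... + Y_λ q^λ) · F(Z^T, q^b), where Y_ν = Σ z_{1,i₁}···z_{ρ,i_ρ} over all (i₁,...,i_ρ) with i₁+...+i_ρ = ν and 0 ≤ i_ℓ ≤ λ_ℓ, and Z^T replaces z_{ℓ,i} by z_{ℓ,i}^{t_{ℓ,i}}. -/
open MvPolynomial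

/-- The variables `z_{ℓ,i}` (`1 ≤ ℓ ≤ ρ`, `1 ≤ i ≤ λ_ℓ`), indexed by pairs
`⟨ℓ, i⟩` with `ℓ : Fin ρ` and `i : Fin (Λ ℓ)`. -/
abbrev ColorIdx (ρ : ℕ) (Λ : Fin ρ → ℕ) := (ℓ : Fin ρ) × Fin (Λ ℓ)

/-- The factor of the generating-function product indexed by `j`:
`∏_{ℓ=1}^{ρ} (1 + z_{ℓ,1}^{t_{ℓ,1}^j} q^{b^j} + ⋯ + z_{ℓ,λ_ℓ}^{t_{ℓ,λ_ℓ}^j} q^{λ_ℓ b^j})`. -/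
noncomputable def OmegaFactor (b ρ : ℕ) (Λ : Fin ρ → ℕ) (T : ColorIdx ρ Λ → ℕ) (j : ℕ) :
    PowerSeries (MvPolynomial (ColorIdx ρ Λ) ℤ) :=
  ∏ ℓ : Fin ρ,
    (1 + ∑ i : Fin (Λ ℓ),
      PowerSeries.C (R := MvPolynomial (ColorIdx ρ Λ) ℤ)
          ((X (⟨ℓ, i⟩ : ColorIdx ρ Λ) : MvPolynomial (ColorIdx ρ Λ) ℤ) ^ T ⟨ℓ, i⟩ ^ j) *
        PowerSeries.X ^ ((i.1 + 1) * b ^ j))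

/-- `Ω` is (characterized as being) defined by the generating function
`∑_{n≥0} Ω(n; Z) q^n = ∏_{j≥0} OmegaFactor j`; the infinite product is rendered
coefficientwise via its stabilized partial products (`n < b^N`). -/
def IsOmega (b ρ : ℕ) (Λ : Fin ρ → ℕ) (T : ColorIdx ρ Λ → ℕ)
    (Om : ℕ → MvPolynomial (ColorIdx ρ Λ) ℤ) : Prop :=
  ∀ n N : ℕ, n < b ^ N →
    PowerSeries.coeff (R := MvPolynomial (ColorIdx ρ Λ) ℤ) n
      (∏ j ∈ Finset.range N, OmegaFactor b ρ Λ T j) = Om n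

/-- The substitution `Z ↦ Z^T`, replacing each variable `z_{ℓ,i}` by `z_{ℓ,i}^{t_{ℓ,i}}`. -/
noncomputable def substT (ρ : ℕ) (Λ : Fin ρ → ℕ) (T : ColorIdx ρ Λ → ℕ)
    (p : MvPolynomial (ColorIdx ρ Λ) ℤ) : MvPolynomial (ColorIdx ρ Λ) ℤ :=
  aeval (fun v : ColorIdx ρ Λ => (X v : MvPolynomial (ColorIdx ρ Λ) ℤ) ^ T v) p

/-- `Ycoeff ν = ∑ z_{1,i₁} ⋯ z_{ρ,i_ρ}`, summed over all `(i₁, …, i_ρ)` with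
`i₁ + ⋯ + i_ρ = ν` and `0 ≤ i_ℓ ≤ λ_ℓ`, where `z_{ℓ,0} = 1`.  (In particular
`Ycoeff 0 = 1` and `Ycoeff μ = 0` for `μ > λ₁ + ⋯ + λ_ρ`.) -/
noncomputable def Ycoeff (ρ : ℕ) (Λ : Fin ρ → ℕ) (ν : ℕ) :
    MvPolynomial (ColorIdx ρ Λ) ℤ :=
  ∑ i : (ℓ : Fin ρ) → Fin (Λ ℓ + 1),
    if (∑ ℓ, (i ℓ : ℕ)) = ν then
      ∏ ℓ, (if h : (i ℓ : ℕ) = 0 then 1 else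
        (X (⟨ℓ, ⟨(i ℓ : ℕ) - 1, by have := (i ℓ).isLt; omega⟩⟩ : ColorIdx ρ Λ) :
          MvPolynomial (ColorIdx ρ Λ) ℤ))
    else 0

namespace OmegaAux

variable (b ρ : ℕ) (Λ : Fin ρ → ℕ) (T : ColorIdx ρ Λ → ℕ)

/-- The map `f(Z, q) ↦ f(Z^T, q^b)` as a ring hom on power series. -/
noncomputable def Phi (hb : 0 < b) :
    PowerSeries (MvPolynomial (ColorIdx ρ Λ) ℤ) →+*
      PowerSeries (MvPolynomial (ColorIdx ρ Λ) ℤ) where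
  toFun f := PowerSeries.mk fun n =>
    if b ∣ n then substT ρ Λ T ((PowerSeries.coeff (n / b)) f) else 0
  map_one' := by
    refine PowerSeries.ext fun n => ?_
    rw [PowerSeries.coeff_mk]
    rcases eq_or_ne n 0 with rfl | hn
    · simp [substT]
    · have h1 : (PowerSeries.coeff (R := MvPolynomial (ColorIdx ρ Λ) ℤ) n) 1 = 0 := by
        rw [PowerSeries.coeff_one, if_neg hn]
      rw [h1]
      split_ifs with h
      · obtain ⟨m, rfl⟩ := h
        rw [Nat.mul_div_cancel_left m hb, PowerSeries.coeff_one,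
          if_neg (by rintro rfl; simp at hn)]
        simp [substT]
      · rfl
  map_mul' f g := by
    refine PowerSeries.ext fun n => ?_
    simp only [PowerSeries.coeff_mk, PowerSeries.coeff_mul]
    by_cases hn : b ∣ n
    · obtain ⟨m, rfl⟩ := hn
      rw [if_pos (dvd_mul_right b m), Nat.mul_div_cancel_left m hb]
      have hsub : (Finset.HasAntidiagonal.antidiagonal m).image
          (fun x : ℕ × ℕ => (b * x.1, b * x.2)) ⊆ Finset.HasAntidiagonal.antidiagonal (b * m) := by
        intro x hx
        simp only [Finset.mem_image, Finset.HasAntidiagonal.mem_antidiagonal] at hx ⊢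
        obtain ⟨⟨u, v⟩, huv, rfl⟩ := hx
        simp only
        rw [← Nat.mul_add, huv]
      rw [← Finset.sum_subset hsub ?_]
      · rw [Finset.sum_image ?_]
        · simp only [substT, map_sum, map_mul]
          refine Finset.sum_congr rfl ?_
          rintro ⟨u, v⟩ -
          simp [Nat.mul_div_cancel_left _ hb, dvd_mul_right]
        · rintro ⟨u, v⟩ - ⟨u', v'⟩ - h
          simp only [Prod.mk.injEq] at h
          obtain ⟨h1, h2⟩ := h
          exact Prod.ext (Nat.eq_of_mul_eq_mul_left hb h1)
            (Nat.eq_of_mul_eq_mul_left hb h2)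
      · rintro ⟨p, q⟩ hpq hnotim
        rw [Finset.HasAntidiagonal.mem_antidiagonal] at hpq
        by_cases hp : b ∣ p
        · by_cases hq : b ∣ q
          · exfalso
            apply hnotim
            simp only [Finset.mem_image, Finset.HasAntidiagonal.mem_antidiagonal]
            obtain ⟨u, rfl⟩ := hp
            obtain ⟨v, rfl⟩ := hq
            refine ⟨(u, v), ?_, rfl⟩
            rw [← Nat.mul_add] at hpq
            exact Nat.eq_of_mul_eq_mul_left hb hpq
          · simp [hq]
        · simp [hp]
    · rw [if_neg hn]
      symm
      apply Finset.sum_eq_zero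
      rintro ⟨p, q⟩ hpq
      rw [Finset.HasAntidiagonal.mem_antidiagonal] at hpq
      by_cases hp : b ∣ p
      · have hq : ¬b ∣ q := fun hq => hn (hpq ▸ Nat.dvd_add hp hq)
        simp [hq]
      · simp [hp]
  map_zero' := by
    refine PowerSeries.ext fun n => ?_
    simp [substT]
  map_add' f g := by
    refine PowerSeries.ext fun n => ?_
    simp only [PowerSeries.coeff_mk, map_add, PowerSeries.coeff_mk]
    split_ifs with h
    · simp [substT, map_add]
    · simp

lemma Phi_coeff (hb : 0 < b) (f : PowerSeries (MvPolynomial (ColorIdx ρ Λ) ℤ)) (n : ℕ) :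
    PowerSeries.coeff n (Phi b ρ Λ T hb f) =
      if b ∣ n then substT ρ Λ T ((PowerSeries.coeff (n / b)) f) else 0 := by
  simp [Phi]

lemma Phi_CXpow (hb : 0 < b) (r : MvPolynomial (ColorIdx ρ Λ) ℤ) (k : ℕ) :
    Phi b ρ Λ T hb (PowerSeries.C r * PowerSeries.X ^ k) =
      PowerSeries.C (substT ρ Λ T r) * PowerSeries.X ^ (b * k) := by
  refine PowerSeries.ext fun n => ?_
  rw [Phi_coeff]
  simp only [PowerSeries.coeff_C_mul, PowerSeries.coeff_X_pow]
  rcases eq_or_ne n (b * k) with rfl | h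
  · rw [if_pos (dvd_mul_right b k), Nat.mul_div_cancel_left k hb,
      if_pos rfl, if_pos rfl, mul_one, mul_one]
  · rw [if_neg h, mul_zero]
    by_cases hdvd : b ∣ n
    · rw [if_pos hdvd, if_neg, mul_zero]
      · simp [substT]
      · obtain ⟨m, rfl⟩ := hdvd
        rw [Nat.mul_div_cancel_left m hb]
        rintro rfl
        exact h rfl
    · rw [if_neg hdvd]

lemma Phi_OmegaFactor (hb : 0 < b) (j : ℕ) :
    Phi b ρ Λ T hb (OmegaFactor b ρ Λ T j) = OmegaFactor b ρ Λ T (j + 1) := by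
  unfold OmegaFactor
  rw [map_prod]
  refine Finset.prod_congr rfl fun ℓ _ => ?_
  rw [map_add, map_one, map_sum]
  congr 1
  refine Finset.sum_congr rfl fun i _ => ?_
  rw [Phi_CXpow]
  congr 2
  · simp only [substT, map_pow, aeval_X, ← pow_mul]
    congr 1
    rw [pow_succ]
    ring
  · rw [pow_succ]
    ring

/-- The coefficient polynomial of the first factor. -/
noncomputable def cf (ℓ : Fin ρ) (i : Fin (Λ ℓ + 1)) : MvPolynomial (ColorIdx ρ Λ) ℤ :=
  if h : (i : ℕ) = 0 then 1 else
    (X (⟨ℓ, ⟨(i : ℕ) - 1, by have := i.isLt; omega⟩⟩ : ColorIdx ρ Λ) :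
      MvPolynomial (ColorIdx ρ Λ) ℤ)

lemma Ycoeff_eq (ν : ℕ) :
    Ycoeff ρ Λ ν = ∑ i : (ℓ : Fin ρ) → Fin (Λ ℓ + 1),
      if (∑ ℓ, (i ℓ : ℕ)) = ν then ∏ ℓ, cf ρ Λ ℓ (i ℓ) else 0 := rfl

lemma Ysum_eq :
    (∑ ν ∈ Finset.range ((∑ ℓ, Λ ℓ) + 1),
        PowerSeries.C (R := MvPolynomial (ColorIdx ρ Λ) ℤ) (Ycoeff ρ Λ ν) *
          PowerSeries.X ^ ν) = OmegaFactor b ρ Λ T 0 := by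
  have factor_eq : ∀ ℓ : Fin ρ,
      (1 + ∑ i : Fin (Λ ℓ),
        PowerSeries.C (R := MvPolynomial (ColorIdx ρ Λ) ℤ)
            ((X (⟨ℓ, i⟩ : ColorIdx ρ Λ) : MvPolynomial (ColorIdx ρ Λ) ℤ) ^ T ⟨ℓ, i⟩ ^ 0) *
          PowerSeries.X ^ ((i.1 + 1) * b ^ 0)) =
      ∑ i : Fin (Λ ℓ + 1),
        PowerSeries.C (R := MvPolynomial (ColorIdx ρ Λ) ℤ) (cf ρ Λ ℓ i) *
          PowerSeries.X ^ (i : ℕ) := by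
    intro ℓ
    have h0 : cf ρ Λ ℓ 0 = 1 := by simp [cf]
    have hs : ∀ i : Fin (Λ ℓ),
        cf ρ Λ ℓ i.succ = X (⟨ℓ, i⟩ : ColorIdx ρ Λ) := by
      intro i
      simp [cf]
    rw [Fin.sum_univ_succ, h0]
    simp only [Fin.val_zero, pow_zero, pow_one, mul_one, map_one, one_mul,
      Fin.val_succ]
    exact congrArg (1 + ·) (Finset.sum_congr rfl fun i _ => by rw [hs i])
  unfold OmegaFactor
  rw [Finset.prod_congr rfl fun ℓ _ => factor_eq ℓ, Finset.prod_univ_sum]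
  rw [Fintype.piFinset_univ]
  have rhs_eq : ∀ p : (ℓ : Fin ρ) → Fin (Λ ℓ + 1),
      (∏ ℓ, PowerSeries.C (R := MvPolynomial (ColorIdx ρ Λ) ℤ) (cf ρ Λ ℓ (p ℓ)) *
        PowerSeries.X ^ ((p ℓ : ℕ))) =
      PowerSeries.C (R := MvPolynomial (ColorIdx ρ Λ) ℤ) (∏ ℓ, cf ρ Λ ℓ (p ℓ)) *
        PowerSeries.X ^ (∑ ℓ, (p ℓ : ℕ)) := by
    intro p
    rw [Finset.prod_mul_distrib, map_prod, Finset.prod_pow_eq_pow_sum]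
  rw [Finset.sum_congr rfl fun p _ => rhs_eq p]
  -- now expand the left side
  have lhs_eq : ∀ ν ∈ Finset.range ((∑ ℓ, Λ ℓ) + 1),
      PowerSeries.C (R := MvPolynomial (ColorIdx ρ Λ) ℤ) (Ycoeff ρ Λ ν) *
        PowerSeries.X ^ ν =
      ∑ p : (ℓ : Fin ρ) → Fin (Λ ℓ + 1),
        if (∑ ℓ, (p ℓ : ℕ)) = ν then
          PowerSeries.C (R := MvPolynomial (ColorIdx ρ Λ) ℤ) (∏ ℓ, cf ρ Λ ℓ (p ℓ)) *
            PowerSeries.X ^ ν else 0 := by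
    intro ν _
    rw [Ycoeff_eq, map_sum, Finset.sum_mul]
    refine Finset.sum_congr rfl fun p _ => ?_
    split_ifs with h <;> simp
  rw [Finset.sum_congr rfl lhs_eq, Finset.sum_comm]
  refine Finset.sum_congr rfl fun p _ => ?_
  have hmemp : (∑ ℓ, ((p ℓ : ℕ))) ∈ Finset.range ((∑ ℓ, Λ ℓ) + 1) := by
    rw [Finset.mem_range, Nat.lt_succ_iff]
    exact Finset.sum_le_sum fun ℓ _ => Fin.is_le (p ℓ)
  rw [Finset.sum_ite_eq, if_pos hmemp]

end OmegaAux

/-- Functional equation for the generating function `F(Z, q) = ∑_{m≥0} Ω(m; Z) q^m`: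
`F(Z, q) = (1 + Y₁ q + ⋯ + Y_λ q^λ) · F(Z^T, q^b)`, where `F(Z^T, q^b)` is the power
series whose coefficient of `q^{bm}` is `Ω(m; Z^T)` (and whose other coefficients
vanish), and `Y₀ = 1`. -/
theorem Omega_functional_equation (b ρ : ℕ) (hb : 2 ≤ b) (hρ : 1 ≤ ρ)
    (Λ : Fin ρ → ℕ) (hΛ : ∀ ℓ, 1 ≤ Λ ℓ) (T : ColorIdx ρ Λ → ℕ) (hT : ∀ v, 1 ≤ T v)
    (Om : ℕ → MvPolynomial (ColorIdx ρ Λ) ℤ) (hOm : IsOmega b ρ Λ T Om) :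
    PowerSeries.mk Om =
      (∑ ν ∈ Finset.range ((∑ ℓ, Λ ℓ) + 1),
          PowerSeries.C (R := MvPolynomial (ColorIdx ρ Λ) ℤ) (Ycoeff ρ Λ ν) *
            PowerSeries.X ^ ν) *
        PowerSeries.mk (fun m =>
          if b ∣ m then substT ρ Λ T (Om (m / b)) else 0) := by
  have hb0 : 0 < b := by omega
  have hb1 : 1 < b := hb
  rw [OmegaAux.Ysum_eq b ρ Λ T]
  have hG : PowerSeries.mk (fun m =>
      if b ∣ m then substT ρ Λ T (Om (m / b)) else 0) =
      OmegaAux.Phi b ρ Λ T hb0 (PowerSeries.mk Om) := by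
    ext m
    rw [PowerSeries.coeff_mk, OmegaAux.Phi_coeff, PowerSeries.coeff_mk]
  rw [hG]
  refine PowerSeries.ext fun n => ?_
  have hn1 : n < b ^ (n + 1) :=
    lt_of_lt_of_le (Nat.lt_pow_self (n := n) hb1)
      (Nat.pow_le_pow_right (by omega) (Nat.le_succ n))
  rw [PowerSeries.coeff_mk, ← hOm n (n + 1) hn1, Finset.prod_range_succ']
  rw [show (∏ j ∈ Finset.range n, OmegaFactor b ρ Λ T (j + 1)) =
      OmegaAux.Phi b ρ Λ T hb0 (∏ j ∈ Finset.range n, OmegaFactor b ρ Λ T j) by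
    rw [map_prod]
    exact Finset.prod_congr rfl fun j _ =>
      (OmegaAux.Phi_OmegaFactor b ρ Λ T hb0 j).symm]
  rw [mul_comm, PowerSeries.coeff_mul, PowerSeries.coeff_mul]
  refine Finset.sum_congr rfl ?_
  rintro ⟨ν, m⟩ hmem
  rw [Finset.HasAntidiagonal.mem_antidiagonal] at hmem
  congr 1
  rw [OmegaAux.Phi_coeff, OmegaAux.Phi_coeff]
  split_ifs with h
  · congr 1
    rw [PowerSeries.coeff_mk]
    refine hOm (m / b) n ?_
    have hm : m ≤ n := by omega
    calc m / b ≤ n / b := Nat.div_le_div_right hm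
      _ < b ^ n := by
        rw [Nat.div_lt_iff_lt_mul hb0, ← pow_succ]
        exact hn1
  · rfl
end

section
/- Let b ≥ 2, ℓ ≥ 1, n ≥ 1 be integers, ρ ≥ 1, Λ = (λ₁,...,λ_ρ) with λ = λ₁+...+λ_ρ. If b ≤ λ, then for all integers j with (λ-b+1)·(b^ℓ-1)/(b-1) ≤ j ≤ b^ℓ - 1, the factorization Ω_{b,T}^Λ(n·b^ℓ + j; Z) = Ω_{b,T}^Λ(n; Z^{T^ℓ}) · Ω_{b,T}^Λ(j; Z) holds; if b > λ, this factorization holds for all 0 ≤ j ≤ b^ℓ - 1. Here Z^{T^ℓ} replaces each variable z_{ℓ',i} by z_{ℓ',i}^{t_{ℓ',i}^ℓ}. -/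
open MvPolynomial

/-- The substitution `Z ↦ Z^{T^ℓ}`, replacing each variable `z_{ℓ',i}` by
`z_{ℓ',i}^{t_{ℓ',i}^ℓ}`. -/
noncomputable def substTpow (ρ : ℕ) (Λ : Fin ρ → ℕ) (T : ColorIdx ρ Λ → ℕ) (l : ℕ)
    (p : MvPolynomial (ColorIdx ρ Λ) ℤ) : MvPolynomial (ColorIdx ρ Λ) ℤ :=
  aeval (fun v : ColorIdx ρ Λ => (X v : MvPolynomial (ColorIdx ρ Λ) ℤ) ^ T v ^ l) p



section Aux
namespace OmegaAux

open PowerSeries Finset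

variable {R : Type*} [CommRing R]

/-- `ψ` is `φ` with `q ↦ q^k` and coefficients mapped by `f`. -/
def Stretch (k : ℕ) (f : R →+* R) (φ ψ : PowerSeries R) : Prop :=
  ∀ m, PowerSeries.coeff (R := R) m ψ = if k ∣ m then f (PowerSeries.coeff (R := R) (m / k) φ) else 0

theorem Stretch.one {k : ℕ} (hk : 0 < k) (f : R →+* R) : Stretch k f 1 1 := by
  intro m
  rcases eq_or_ne m 0 with rfl | hm
  · simp
  · rw [PowerSeries.coeff_one, if_neg hm]
    split_ifs with h
    · obtain ⟨c, rfl⟩ := h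
      have hc : c ≠ 0 := by rintro rfl; simp at hm
      rw [Nat.mul_div_cancel_left _ hk, PowerSeries.coeff_one, if_neg hc, map_zero]
    · rfl

theorem Stretch.mul {k : ℕ} (hk : 0 < k) {f : R →+* R} {φ₁ φ₂ ψ₁ ψ₂ : PowerSeries R}
    (h₁ : Stretch k f φ₁ ψ₁) (h₂ : Stretch k f φ₂ ψ₂) :
    Stretch k f (φ₁ * φ₂) (ψ₁ * ψ₂) := by
  intro m
  rw [PowerSeries.coeff_mul]
  by_cases hm : k ∣ m
  · obtain ⟨m', rfl⟩ := hm
    rw [if_pos (dvd_mul_right k m'), Nat.mul_div_cancel_left _ hk, PowerSeries.coeff_mul, map_sum]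
    have hinj : Set.InjOn (fun q : ℕ × ℕ => (k * q.1, k * q.2)) (Finset.HasAntidiagonal.antidiagonal m') := by
      intro p _ q _ h
      have h1 : k * p.1 = k * q.1 := congrArg Prod.fst h
      have h2 : k * p.2 = k * q.2 := congrArg Prod.snd h
      exact Prod.ext (Nat.eq_of_mul_eq_mul_left hk h1) (Nat.eq_of_mul_eq_mul_left hk h2)
    have hsub : (Finset.HasAntidiagonal.antidiagonal m').image (fun q : ℕ × ℕ => (k * q.1, k * q.2)) ⊆
        Finset.HasAntidiagonal.antidiagonal (k * m') := by
      intro p hp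
      obtain ⟨q, hq, rfl⟩ := Finset.mem_image.1 hp
      rw [Finset.HasAntidiagonal.mem_antidiagonal] at hq ⊢
      simp only [← Nat.mul_add, hq]
    have himg : ∀ p ∈ Finset.HasAntidiagonal.antidiagonal (k * m'),
        p ∉ (Finset.HasAntidiagonal.antidiagonal m').image (fun q : ℕ × ℕ => (k * q.1, k * q.2)) →
        PowerSeries.coeff (R := R) p.1 ψ₁ * PowerSeries.coeff (R := R) p.2 ψ₂ = 0 := by
      rintro ⟨u, v⟩ hp hni
      rw [Finset.HasAntidiagonal.mem_antidiagonal] at hp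
      by_cases hu : k ∣ u
      · by_cases hv : k ∣ v
        · exfalso
          obtain ⟨a, rfl⟩ := hu
          obtain ⟨c, rfl⟩ := hv
          refine hni (Finset.mem_image.2 ⟨(a, c), Finset.HasAntidiagonal.mem_antidiagonal.2 ?_, rfl⟩)
          have : k * (a + c) = k * m' := by rw [Nat.mul_add, hp]
          exact Nat.eq_of_mul_eq_mul_left hk this
        · rw [h₂ v, if_neg hv, mul_zero]
      · rw [h₁ u, if_neg hu, zero_mul]
    rw [← Finset.sum_subset hsub himg, Finset.sum_image hinj]
    refine Finset.sum_congr rfl fun q _ => ?_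
    rw [h₁, h₂, if_pos (dvd_mul_right k q.1), if_pos (dvd_mul_right k q.2),
      Nat.mul_div_cancel_left _ hk, Nat.mul_div_cancel_left _ hk, map_mul]
  · rw [if_neg hm]
    refine Finset.sum_eq_zero fun p hp => ?_
    rw [Finset.HasAntidiagonal.mem_antidiagonal] at hp
    by_cases hu : k ∣ p.1
    · have hv : ¬ k ∣ p.2 := fun hv => hm (hp ▸ dvd_add hu hv)
      rw [h₂ p.2, if_neg hv, mul_zero]
    · rw [h₁ p.1, if_neg hu, zero_mul]

theorem Stretch.prod {k : ℕ} (hk : 0 < k) {f : R →+* R} {ι : Type*} (s : Finset ι)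
    (φ ψ : ι → PowerSeries R) (h : ∀ i ∈ s, Stretch k f (φ i) (ψ i)) :
    Stretch k f (∏ i ∈ s, φ i) (∏ i ∈ s, ψ i) := by
  induction s using Finset.cons_induction with
  | empty => simpa using Stretch.one hk f
  | cons a s ha ih =>
    rw [Finset.prod_cons, Finset.prod_cons]
    exact Stretch.mul hk (h a (Finset.mem_cons_self a s))
      (ih fun i hi => h i (Finset.mem_cons_of_mem hi))

theorem Stretch.add {k : ℕ} {f : R →+* R} {φ₁ φ₂ ψ₁ ψ₂ : PowerSeries R}
    (h₁ : Stretch k f φ₁ ψ₁) (h₂ : Stretch k f φ₂ ψ₂) :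
    Stretch k f (φ₁ + φ₂) (ψ₁ + ψ₂) := by
  intro m
  rw [map_add, h₁ m, h₂ m, map_add, map_add]
  split_ifs <;> simp

theorem Stretch.sum {k : ℕ} (hk : 0 < k) {f : R →+* R} {ι : Type*} (s : Finset ι)
    (φ ψ : ι → PowerSeries R) (h : ∀ i ∈ s, Stretch k f (φ i) (ψ i)) :
    Stretch k f (∑ i ∈ s, φ i) (∑ i ∈ s, ψ i) := by
  induction s using Finset.cons_induction with
  | empty =>
    intro m; simp only [Finset.sum_empty, map_zero]
    split_ifs <;> simp
  | cons a s ha ih =>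
    rw [Finset.sum_cons, Finset.sum_cons]
    exact Stretch.add (h a (Finset.mem_cons_self a s))
      (ih fun i hi => h i (Finset.mem_cons_of_mem hi))

theorem Stretch.atom {k : ℕ} (hk : 0 < k) (f : R →+* R) (p : R) (e : ℕ) :
    Stretch k f (PowerSeries.C (R := R) p * (PowerSeries.X : PowerSeries R) ^ e) (PowerSeries.C (R := R) (f p) * (PowerSeries.X : PowerSeries R) ^ (k * e)) := by
  intro m
  rw [PowerSeries.coeff_C_mul_X_pow]
  by_cases hd : k ∣ m
  · obtain ⟨c, rfl⟩ := hd
    rw [if_pos (dvd_mul_right k c), Nat.mul_div_cancel_left _ hk, PowerSeries.coeff_C_mul_X_pow]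
    by_cases hc : c = e
    · subst hc; rw [if_pos rfl, if_pos rfl]
    · rw [if_neg hc, if_neg (fun h => hc (Nat.eq_of_mul_eq_mul_left hk h)), map_zero]
  · rw [if_neg hd, if_neg (fun h => hd (by rw [h]; exact dvd_mul_right k e))]

theorem coeff_mul_bound {φ ψ : PowerSeries R} {d₁ d₂ : ℕ}
    (h₁ : ∀ u, d₁ < u → PowerSeries.coeff (R := R) u φ = 0) (h₂ : ∀ u, d₂ < u → PowerSeries.coeff (R := R) u ψ = 0) :
    ∀ u, d₁ + d₂ < u → PowerSeries.coeff (R := R) u (φ * ψ) = 0 := by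
  intro u hu
  rw [PowerSeries.coeff_mul]
  refine Finset.sum_eq_zero fun p hp => ?_
  rw [Finset.HasAntidiagonal.mem_antidiagonal] at hp
  rcases lt_or_ge d₁ p.1 with h | h
  · rw [h₁ p.1 h, zero_mul]
  · rw [h₂ p.2 (by omega), mul_zero]

theorem coeff_prod_bound {ι : Type*} (s : Finset ι) (φ : ι → PowerSeries R) (d : ι → ℕ)
    (h : ∀ i ∈ s, ∀ u, d i < u → PowerSeries.coeff (R := R) u (φ i) = 0) :
    ∀ u, (∑ i ∈ s, d i) < u → PowerSeries.coeff (R := R) u (∏ i ∈ s, φ i) = 0 := by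
  induction s using Finset.cons_induction with
  | empty =>
    intro u hu
    simp only [Finset.prod_empty, PowerSeries.coeff_one]
    rw [if_neg]; omega
  | cons a s ha ih =>
    rw [Finset.prod_cons, Finset.sum_cons]
    exact coeff_mul_bound (h a (Finset.mem_cons_self a s))
      (ih fun i hi => h i (Finset.mem_cons_of_mem hi))

end OmegaAux
end Aux
section OmegaSpecific
open OmegaAux PowerSeries Finset

variable (b ρ : ℕ) (Λ : Fin ρ → ℕ) (T : ColorIdx ρ Λ → ℕ)

/-- The substitution `Z ↦ Z^{T^l}` as a ring hom. -/
noncomputable def substTpowHom (l : ℕ) :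
    MvPolynomial (ColorIdx ρ Λ) ℤ →+* MvPolynomial (ColorIdx ρ Λ) ℤ :=
  (aeval (fun v : ColorIdx ρ Λ =>
    (X v : MvPolynomial (ColorIdx ρ Λ) ℤ) ^ T v ^ l)).toRingHom

theorem stretch_factor (hb : 0 < b) (l j : ℕ) :
    Stretch (b ^ l) (substTpowHom ρ Λ T l) (OmegaFactor b ρ Λ T j)
      (OmegaFactor b ρ Λ T (j + l)) := by
  have hk : 0 < b ^ l := Nat.pow_pos hb
  unfold OmegaFactor
  refine Stretch.prod hk _ _ _ fun ℓ _ => ?_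
  refine Stretch.add (Stretch.one hk _) (Stretch.sum hk _ _ _ fun i _ => ?_)
  have h1 : (X (⟨ℓ, i⟩ : ColorIdx ρ Λ) : MvPolynomial (ColorIdx ρ Λ) ℤ) ^ T ⟨ℓ, i⟩ ^ (j + l)
      = substTpowHom ρ Λ T l ((X (⟨ℓ, i⟩ : ColorIdx ρ Λ) :
          MvPolynomial (ColorIdx ρ Λ) ℤ) ^ T ⟨ℓ, i⟩ ^ j) := by
    simp only [substTpowHom, AlgHom.toRingHom_eq_coe, RingHom.coe_coe, map_pow, aeval_X,
      ← pow_mul]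
    rw [← pow_add, add_comm l j]
  have h2 : (i.1 + 1) * b ^ (j + l) = b ^ l * ((i.1 + 1) * b ^ j) := by
    rw [pow_add]; ring
  rw [h1, h2]
  exact Stretch.atom hk _ _ _

theorem coeff_factor_bound (hb : 0 < b) (j : ℕ) :
    ∀ u, (∑ ℓ, Λ ℓ) * b ^ j < u →
      PowerSeries.coeff (R := MvPolynomial (ColorIdx ρ Λ) ℤ) u (OmegaFactor b ρ Λ T j) = 0 := by
  have hbj : 0 < b ^ j := Nat.pow_pos hb
  unfold OmegaFactor
  have := coeff_prod_bound (R := MvPolynomial (ColorIdx ρ Λ) ℤ) Finset.univ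
    (fun ℓ : Fin ρ => 1 + ∑ i : Fin (Λ ℓ),
      PowerSeries.C (R := MvPolynomial (ColorIdx ρ Λ) ℤ)
          ((X (⟨ℓ, i⟩ : ColorIdx ρ Λ) : MvPolynomial (ColorIdx ρ Λ) ℤ) ^ T ⟨ℓ, i⟩ ^ j) *
        (PowerSeries.X : PowerSeries (MvPolynomial (ColorIdx ρ Λ) ℤ)) ^ ((i.1 + 1) * b ^ j))
    (fun ℓ => Λ ℓ * b ^ j) ?_
  · intro u hu
    refine this u ?_
    rwa [← Finset.sum_mul]
  · intro ℓ _ u hu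
    have hu' : Λ ℓ * b ^ j < u := hu
    have hu0 : u ≠ 0 := by omega
    simp only [map_add, PowerSeries.coeff_one, map_sum, PowerSeries.coeff_C_mul_X_pow,
      if_neg hu0]
    rw [zero_add]
    refine Finset.sum_eq_zero fun i _ => ?_
    rw [if_neg]
    have h3 : (i.1 + 1) * b ^ j ≤ Λ ℓ * b ^ j :=
      Nat.mul_le_mul_right _ (by have := i.isLt; omega)
    omega

theorem key_factorization (hb : 2 ≤ b)
    (Om : ℕ → MvPolynomial (ColorIdx ρ Λ) ℤ) (hOm : IsOmega b ρ Λ T Om)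
    (l n j : ℕ) (hjlt : j < b ^ l)
    (hcase : (∑ ℓ, Λ ℓ) * (∑ i ∈ Finset.range l, b ^ i) < b ^ l + j) :
    Om (n * b ^ l + j) = substTpow ρ Λ T l (Om n) * Om j := by
  have hb1 : 1 < b := hb
  have hk : 0 < b ^ l := Nat.pow_pos (by omega)
  set k := b ^ l with hkdef
  set F := OmegaFactor b ρ Λ T with hF
  set f := substTpowHom ρ Λ T l with hf
  -- the truncation level
  have hnpow : n < b ^ n := Nat.lt_pow_self hb1
  have hbig : n * k + j < b ^ (l + n) := by
    have h1 : n + 1 ≤ b ^ n := hnpow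
    calc n * k + j < n * k + k := by omega
    _ = (n + 1) * k := by ring
    _ ≤ b ^ n * k := Nat.mul_le_mul_right _ h1
    _ = b ^ (l + n) := by rw [hkdef, ← pow_add, add_comm]
  have h0 := hOm (n * k + j) (l + n) hbig
  rw [Finset.prod_range_add] at h0
  set G := ∏ x ∈ Finset.range l, F x with hG
  set H := ∏ x ∈ Finset.range n, F (l + x) with hH
  have hstretch : Stretch k f (∏ x ∈ Finset.range n, F x) H := by
    refine Stretch.prod hk _ _ _ fun i _ => ?_
    rw [add_comm l i]
    exact stretch_factor b ρ Λ T (by omega) l i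
  have hGbound : ∀ u, (∑ ℓ, Λ ℓ) * (∑ i ∈ Finset.range l, b ^ i) < u →
      PowerSeries.coeff (R := MvPolynomial (ColorIdx ρ Λ) ℤ) u G = 0 := by
    intro u hu
    refine coeff_prod_bound (Finset.range l) F (fun i => (∑ ℓ, Λ ℓ) * b ^ i)
      (fun i _ => coeff_factor_bound b ρ Λ T (by omega) i) u ?_
    rwa [← Finset.mul_sum]
  rw [PowerSeries.coeff_mul] at h0
  rw [Finset.sum_eq_single_of_mem (j, n * k)
    (Finset.HasAntidiagonal.mem_antidiagonal.2 (add_comm j (n * k)))] at h0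
  · -- the surviving term
    have hcj : PowerSeries.coeff (R := MvPolynomial (ColorIdx ρ Λ) ℤ) j G = Om j := hOm j l hjlt
    have hcn : PowerSeries.coeff (R := MvPolynomial (ColorIdx ρ Λ) ℤ) (n * k) H = f (Om n) := by
      rw [hstretch (n * k), if_pos (Dvd.intro_left n rfl), Nat.mul_div_cancel n hk,
        hOm n n hnpow]
    rw [hcj, hcn] at h0
    rw [← h0, mul_comm]
    rfl
  · -- all other terms vanish
    rintro ⟨u, v⟩ hp hne
    rw [Finset.HasAntidiagonal.mem_antidiagonal] at hp
    by_cases hdvd : k ∣ v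
    · obtain ⟨a, rfl⟩ := hdvd
      have hc : n * k = k * n := mul_comm n k
      have han : a ≤ n := by
        by_contra hgt
        have h4 : k * (n + 1) ≤ k * a := Nat.mul_le_mul_left _ (by omega)
        have h5 : k * (n + 1) = k * n + k := by ring
        omega
      rcases eq_or_lt_of_le han with rfl | hlt
      · exfalso
        have h6 : k * a = a * k := mul_comm k a
        exact hne (Prod.ext (by omega) (by omega))
      · have hsk : k * (a + 1) ≤ k * n := Nat.mul_le_mul_left _ (by omega)
        have h5 : k * (a + 1) = k * a + k := by ring
        have hu : k + j ≤ u := by omega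
        rw [hGbound u (by omega), zero_mul]
    · rw [hstretch v, if_neg hdvd, mul_zero]

end OmegaSpecific

/-- Factorization: for `b ≥ 2`, `ℓ ≥ 1`, `n ≥ 1`, with `λ = λ₁ + ⋯ + λ_ρ`:
if `b ≤ λ`, then `Ω(n b^ℓ + j; Z) = Ω(n; Z^{T^ℓ}) · Ω(j; Z)` for all `j` with
`(λ-b+1)(b^ℓ-1)/(b-1) ≤ j ≤ b^ℓ - 1`; if `b > λ`, the same holds for all
`0 ≤ j ≤ b^ℓ - 1`. -/
theorem Omega_factorization (b ρ : ℕ) (hb : 2 ≤ b) (hρ : 1 ≤ ρ)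
    (Λ : Fin ρ → ℕ) (hΛ : ∀ ℓ, 1 ≤ Λ ℓ) (T : ColorIdx ρ Λ → ℕ) (hT : ∀ v, 1 ≤ T v)
    (Om : ℕ → MvPolynomial (ColorIdx ρ Λ) ℤ) (hOm : IsOmega b ρ Λ T Om)
    (l n : ℕ) (hl : 1 ≤ l) (hn : 1 ≤ n) :
    (b ≤ ∑ ℓ, Λ ℓ →
      ∀ j : ℕ, ((∑ ℓ, Λ ℓ) - b + 1) * (b ^ l - 1) / (b - 1) ≤ j → j ≤ b ^ l - 1 →
        Om (n * b ^ l + j) = substTpow ρ Λ T l (Om n) * Om j) ∧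
    ((∑ ℓ, Λ ℓ) < b →
      ∀ j : ℕ, j ≤ b ^ l - 1 →
        Om (n * b ^ l + j) = substTpow ρ Λ T l (Om n) * Om j) := by
  have hlam : 1 ≤ ∑ ℓ, Λ ℓ :=
    le_trans (hΛ ⟨0, hρ⟩) (Finset.single_le_sum (fun i _ => Nat.zero_le _) (Finset.mem_univ _))
  have hk : 0 < b ^ l := Nat.pow_pos (by omega)
  have hgeo : (b - 1) * ∑ i ∈ Finset.range l, b ^ i = b ^ l - 1 := by
    clear hk hl hn
    induction l with
    | zero => simp
    | succ m ih =>
      rw [Finset.sum_range_succ, Nat.mul_add, ih, pow_succ]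
      have h1 : 1 ≤ b ^ m := Nat.one_le_pow _ _ (by omega)
      have h2 : (b - 1) * b ^ m = b * b ^ m - b ^ m := Nat.sub_mul b 1 (b ^ m) ▸ by
        rw [one_mul]
      have h3 : b ^ m ≤ b * b ^ m := Nat.le_mul_of_pos_left _ (by omega)
      have h4 : b ^ m * b = b * b ^ m := mul_comm _ _
      omega
  constructor
  · intro hbl j hjlo hjhi
    have hjlt : j < b ^ l := by omega
    refine key_factorization b ρ Λ T hb Om hOm l n j hjlt ?_
    have hdiv : ((∑ ℓ, Λ ℓ) - b + 1) * (b ^ l - 1) / (b - 1)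
        = ((∑ ℓ, Λ ℓ) - b + 1) * ∑ i ∈ Finset.range l, b ^ i := by
      rw [← hgeo, mul_left_comm, Nat.mul_div_cancel_left _ (by omega : 0 < b - 1)]
    rw [hdiv] at hjlo
    have hsplit : (∑ ℓ, Λ ℓ) * ∑ i ∈ Finset.range l, b ^ i
        = (b - 1) * (∑ i ∈ Finset.range l, b ^ i)
          + ((∑ ℓ, Λ ℓ) - b + 1) * ∑ i ∈ Finset.range l, b ^ i := by
      rw [← Nat.add_mul]
      congr 1
      omega
    omega
  · intro hbl j hjhi
    have hjlt : j < b ^ l := by omega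
    refine key_factorization b ρ Λ T hb Om hOm l n j hjlt ?_
    have : (∑ ℓ, Λ ℓ) * ∑ i ∈ Finset.range l, b ^ i
        ≤ (b - 1) * ∑ i ∈ Finset.range l, b ^ i := Nat.mul_le_mul_right _ (by omega)
    omega
end
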